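/- A partial injective order-preserving map α on {1,...,n} whose domain and image both have size n-1 extends to a unique permutation of {1,...,n}; moreover this extension is an even permutation if and only if the unique element missing from the domain and the unique element missing from the image have the same parity. -/

import Mathlib

/-- Partial transformations on `Fin n`, represented as `Option`-valued maps. -/
abbrev PT (n : ℕ) := Fin n → Option (Fin n)

/-- Left-to-right composition of partial maps: `x (pcomp f g) = (x f) g`. -/
def pcomp {n : ℕ} (f g : PT n) : PT n := fun x => (f x).bind g

/-- The identity partial map. -/
def pid (n : ℕ) : PT n := fun x => some x

instance PTMonoid (n : ℕ) : Monoid (PT n) where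
  mul := pcomp
  one := pid n
  mul_assoc f g h := funext fun x => by
    show ((f x).bind g).bind h = (f x).bind fun y => (g y).bind h
    cases f x <;> rfl
  one_mul f := rfl
  mul_one f := funext fun x => by
    show (f x).bind (fun y => some y) = f x
    cases f x <;> rfl

/-- `f` is injective on its domain. -/
def pInj {n : ℕ} (f : PT n) : Prop := ∀ x y a, f x = some a → f y = some a → x = y

/-- The domain of a partial map. -/
def pDom {n : ℕ} (f : PT n) : Finset (Fin n) := Finset.univ.filter fun x => (f x).isSome

/-- The image of a partial map. -/
def pIm {n : ℕ} (f : PT n) : Finset (Fin n) := Finset.univ.filter fun b => ∃ x, f x = some b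

/-- The rank of a partial map is the size of its domain. -/
def prank {n : ℕ} (f : PT n) : ℕ := (pDom f).card

/-- Order-preserving partial maps. -/
def orderPres {n : ℕ} (f : PT n) : Prop :=
  ∀ x y a b, f x = some a → f y = some b → x ≤ y → a ≤ b

/-- Order-reversing partial maps. -/
def orderRev {n : ℕ} (f : PT n) : Prop :=
  ∀ x y a b, f x = some a → f y = some b → x ≤ y → b ≤ a

/-- Monotone partial maps. -/
def isMonotonePT {n : ℕ} (f : PT n) : Prop := orderPres f ∨ orderRev f

/-- The permutation `σ` extends the partial map `f`. -/
def extendsTo {n : ℕ} (σ : Equiv.Perm (Fin n)) (f : PT n) : Prop :=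
  ∀ x a, f x = some a → σ x = a

/-- Membership in the alternating inverse monoid `AI_n`: an injective partial map of
rank `≤ n - 2`, or one that extends to an even permutation. -/
def inAI {n : ℕ} (f : PT n) : Prop :=
  pInj f ∧ (prank f + 2 ≤ n ∨
    ∃ σ : Equiv.Perm (Fin n), σ ∈ alternatingGroup (Fin n) ∧ extendsTo σ f)

/-- `AO_n = AI_n ∩ POI_n`. -/
def AO (n : ℕ) : Set (PT n) := {f | orderPres f ∧ inAI f}

/-- `AM_n = AI_n ∩ PMI_n`. -/
def AM (n : ℕ) : Set (PT n) := {f | isMonotonePT f ∧ inAI f}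

/-- Green's `J`-relation relative to a submonoid-like subset `S` (containing the identity):
`a J b` iff each lies in the two-sided principal ideal of the other. -/
def JRelIn {n : ℕ} (S : Set (PT n)) (a b : PT n) : Prop :=
  (∃ u v, u ∈ S ∧ v ∈ S ∧ a = u * b * v) ∧ (∃ u v, u ∈ S ∧ v ∈ S ∧ b = u * a * v)

/-- An order-preserving partial injection of rank `n-1` extends to a unique
permutation, which is even iff the missing domain and image elements have the same parity. -/
theorem stmt0 {n : ℕ} (hn : 2 ≤ n) (f : PT n) (hinj : pInj f) (hop : orderPres f)
    (d i : Fin n) (hd : pDom f = Finset.univ.erase d) (hi : pIm f = Finset.univ.erase i) :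
    (∃! σ : Equiv.Perm (Fin n), extendsTo σ f) ∧
      ∀ σ : Equiv.Perm (Fin n), extendsTo σ f →
        (σ ∈ alternatingGroup (Fin n) ↔ d.val % 2 = i.val % 2) := by
  obtain ⟨m, rfl⟩ : ∃ m, n = m + 1 := ⟨n - 1, by omega⟩
  -- domain characterization
  have hdom : ∀ x : Fin (m+1), (f x).isSome ↔ x ≠ d := by
    intro x
    have := Finset.ext_iff.mp hd x
    simpa [pDom, Finset.mem_erase] using this
  have him : ∀ b : Fin (m+1), (∃ x, f x = some b) ↔ b ≠ i := by
    intro b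
    have := Finset.ext_iff.mp hi b
    simpa [pIm, Finset.mem_erase] using this
  -- the function on the domain
  have hsome : ∀ j : Fin m, (f (d.succAbove j)).isSome :=
    fun j => (hdom _).mpr (Fin.succAbove_ne d j)
  set h : Fin m → Fin (m+1) := fun j => (f (d.succAbove j)).get (hsome j) with hh
  have hfh : ∀ j, f (d.succAbove j) = some (h j) := fun j => (Option.some_get (hsome j)).symm
  have hmono : StrictMono h := by
    intro j k hjk
    have hle : h j ≤ h k := hop _ _ _ _ (hfh j) (hfh k) (Fin.succAbove_lt_succAbove_iff.mpr hjk).le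
    have hne : h j ≠ h k := by
      intro e
      exact absurd (hinj _ _ _ (hfh j) (e ▸ hfh k)) (by
        simp [Fin.succAbove_right_injective.ne_iff, hjk.ne])
    exact lt_of_le_of_ne hle hne
  have hrange : Set.range h = Set.range (Fin.succAbove i) := by
    rw [Fin.range_succAbove]
    apply Set.eq_of_subset_of_subset
    · rintro b ⟨j, rfl⟩
      exact (him _).mp ⟨_, hfh j⟩
    · rintro b hb
      obtain ⟨x, hx⟩ := (him b).mpr hb
      have hxd : x ≠ d := (hdom x).mp (by simp [hx])
      obtain ⟨j, rfl⟩ := Fin.exists_succAbove_eq hxd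
      exact ⟨j, by have := hfh j; rw [hx] at this; exact (Option.some_injective _ this).symm⟩
  have hwf : WellFoundedLT (Fin m) := inferInstance
  have hid : h = Fin.succAbove i :=
    (StrictMono.range_inj hmono (Fin.strictMono_succAbove i)).mp hrange
  -- the canonical completion
  set σ0 : Equiv.Perm (Fin (m+1)) := i.cycleRange⁻¹ * d.cycleRange with hσ0
  have hext0 : extendsTo σ0 f := by
    intro x a hx
    have hxd : x ≠ d := (hdom x).mp (by simp [hx])
    obtain ⟨j, rfl⟩ := Fin.exists_succAbove_eq hxd
    have ha : a = h j := Option.some_injective _ ((hfh j).symm.trans hx).symm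
    show i.cycleRange⁻¹ (d.cycleRange (d.succAbove j)) = a
    rw [Fin.cycleRange_succAbove, ha, hid]
    exact Fin.cycleRange_symm_succ i j
  have huniq : ∀ σ : Equiv.Perm (Fin (m+1)), extendsTo σ f → σ = σ0 := by
    intro σ hσ
    have hagree : ∀ x : Fin (m+1), x ≠ d → σ x = σ0 x := by
      intro x hx
      obtain ⟨a, ha⟩ := Option.isSome_iff_exists.mp ((hdom x).mpr hx)
      rw [hσ x a ha, hext0 x a ha]
    have hdd : σ d = σ0 d := by
      by_contra hne
      set y := σ0.symm (σ d) with hy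
      have hyd : y ≠ d := by
        intro e
        apply hne
        have : σ0 y = σ d := Equiv.apply_symm_apply σ0 (σ d)
        rw [e] at this
        exact this.symm
      have h2 : σ y = σ0 y := hagree _ hyd
      have h3 : σ0 y = σ d := Equiv.apply_symm_apply σ0 (σ d)
      exact hyd (σ.injective (h2.trans h3))
    apply Equiv.ext
    intro x
    by_cases hx : x = d
    · rw [hx]; exact hdd
    · exact hagree x hx
  have hsign : Equiv.Perm.sign σ0 = (-1 : ℤˣ) ^ (i.val + d.val) := by
    rw [hσ0, map_mul, map_inv, Fin.sign_cycleRange, Fin.sign_cycleRange, pow_add]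
    simp
  refine ⟨⟨σ0, hext0, huniq⟩, ?_⟩
  intro σ hσ
  rw [huniq σ hσ, Equiv.Perm.mem_alternatingGroup, hsign]
  rw [show ((1 : ℤˣ) = (-1) ^ (0:ℕ)) by simp, ← Units.val_inj]
  push_cast
  rw [neg_one_pow_eq_one_iff_even (by norm_num)]
  rw [Nat.even_add, Nat.even_iff, Nat.even_iff]
  omega
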